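/- Let A be a unital associative superalgebra and X(u) a 2×2 matrix of YQ form with entries in A[[u^{-1}]]. If x_{11}(u) is invertible in A[[u^{-1}]] and x_{-1,1}(u) ∈ u^{-1}A[[u^{-1}]], then X(u) is invertible, and its inverse is again of YQ form. -/

import Mathlib

/-- Index set `{1,-1}` of `C^{1|1}`: `inl 0 = 1`, `inr 0 = -1`. -/
abbrev I1 := Fin 1 ⊕ Fin 1

def I1.neg : I1 → I1 := Sum.swap

def I1.par : I1 → ZMod 2
  | Sum.inl _ => 0
  | Sum.inr _ => 1

/-- The substitution `u ↦ -u` on a formal series in `u⁻¹` (negating the coefficient of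
`u^{-r}` for odd `r`); we identify `A[[u⁻¹]]` with `PowerSeries A`. -/
noncomputable def negSub {A : Type*} [Ring A] (f : PowerSeries A) : PowerSeries A :=
  PowerSeries.mk fun r => ((-1 : ℤ) ^ r) • PowerSeries.coeff r f

/-- A `2×2` matrix `X(u) = Σ_{i,j} ε_{ij} ⊗ x_{ij}(u)` with entries in `A[[u⁻¹]]` is of
YQ form if `x_{-i,-j}(u) = x_{ij}(-u)` and each coefficient of `x_{ij}(u)` is homogeneous
of parity `|i| + |j|` with respect to the grading `𝒜` of the superalgebra `A`. -/
def IsYQ {A : Type*} [Ring A] [Algebra ℂ A] (𝒜 : ZMod 2 → Submodule ℂ A)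
    (X : I1 → I1 → PowerSeries A) : Prop :=
  (∀ i j, X (I1.neg i) (I1.neg j) = negSub (X i j)) ∧
  (∀ i j (r : ℕ), PowerSeries.coeff r (X i j) ∈ 𝒜 (I1.par i + I1.par j))

/-- Product of two `2×2` matrices `Σ ε_{ij} ⊗ x_{ij}(u)` in the super tensor product
`End(C^{1|1}) ⊗ A[[u⁻¹]]` (with Koszul signs). -/
noncomputable def ymul {A : Type*} [Ring A] (X Y : I1 → I1 → PowerSeries A) :
    I1 → I1 → PowerSeries A :=
  fun i j => ∑ k : I1,
    ((-1 : ℤ) ^ (((I1.par i + I1.par k) * (I1.par k + I1.par j)).val)) • (X i k * Y k j)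

open PowerSeries

section NegSub

variable {A : Type*} [Ring A]

lemma negSub_coeff (f : PowerSeries A) (n : ℕ) :
    coeff n (negSub f) = ((-1 : ℤ)^n) • coeff n f := by
  simp [negSub]

lemma negSub_negSub (f : PowerSeries A) : negSub (negSub f) = f := by
  ext n
  rw [negSub_coeff, negSub_coeff, smul_smul, ← mul_pow]
  norm_num

lemma negSub_one : negSub (1 : PowerSeries A) = 1 := by
  ext n
  rw [negSub_coeff]
  by_cases h : n = 0
  · subst h; simp
  · simp [PowerSeries.coeff_one, h]

lemma negSub_zero {A : Type*} [Ring A] : negSub (0 : PowerSeries A) = 0 := by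
  ext n; simp [negSub_coeff]

lemma negSub_add (f g : PowerSeries A) : negSub (f + g) = negSub f + negSub g := by
  ext n; simp [negSub_coeff, smul_add]

lemma negSub_neg (f : PowerSeries A) : negSub (-f) = -negSub f := by
  ext n; simp [negSub_coeff]

lemma negSub_sub (f g : PowerSeries A) : negSub (f - g) = negSub f - negSub g := by
  ext n; simp [negSub_coeff, smul_sub]

lemma negSub_mul (f g : PowerSeries A) : negSub (f * g) = negSub f * negSub g := by
  ext n
  rw [negSub_coeff, coeff_mul, coeff_mul, Finset.smul_sum]
  apply Finset.sum_congr rfl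
  rintro ⟨i, j⟩ hij
  rw [Finset.HasAntidiagonal.mem_antidiagonal] at hij
  rw [negSub_coeff, negSub_coeff, smul_mul_smul_comm, ← pow_add, hij]

lemma negSub_constantCoeff (f : PowerSeries A) :
    constantCoeff (negSub f) = constantCoeff f := by
  rw [← coeff_zero_eq_constantCoeff_apply, ← coeff_zero_eq_constantCoeff_apply, negSub_coeff]
  simp

end NegSub

section YmulUnfold

variable {A : Type*} [Ring A] (X Y : I1 → I1 → PowerSeries A)

lemma ymul_ll : ymul X Y (Sum.inl 0) (Sum.inl 0)
    = X (Sum.inl 0) (Sum.inl 0) * Y (Sum.inl 0) (Sum.inl 0)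
      - X (Sum.inl 0) (Sum.inr 0) * Y (Sum.inr 0) (Sum.inl 0) := by
  simp [ymul, Fintype.sum_sum_type, I1.par, (show ((1:ZMod 2)+1) = 0 by decide),
    (show ZMod.val (1 : ZMod 2) = 1 by decide), sub_eq_add_neg]

lemma ymul_lr : ymul X Y (Sum.inl 0) (Sum.inr 0)
    = X (Sum.inl 0) (Sum.inl 0) * Y (Sum.inl 0) (Sum.inr 0)
      + X (Sum.inl 0) (Sum.inr 0) * Y (Sum.inr 0) (Sum.inr 0) := by
  simp [ymul, Fintype.sum_sum_type, I1.par, (show ((1:ZMod 2)+1) = 0 by decide),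
    (show ZMod.val (1 : ZMod 2) = 1 by decide)]

lemma ymul_rl : ymul X Y (Sum.inr 0) (Sum.inl 0)
    = X (Sum.inr 0) (Sum.inl 0) * Y (Sum.inl 0) (Sum.inl 0)
      + X (Sum.inr 0) (Sum.inr 0) * Y (Sum.inr 0) (Sum.inl 0) := by
  simp [ymul, Fintype.sum_sum_type, I1.par, (show ((1:ZMod 2)+1) = 0 by decide),
    (show ZMod.val (1 : ZMod 2) = 1 by decide)]

lemma ymul_rr : ymul X Y (Sum.inr 0) (Sum.inr 0)
    = - (X (Sum.inr 0) (Sum.inl 0) * Y (Sum.inl 0) (Sum.inr 0))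
      + X (Sum.inr 0) (Sum.inr 0) * Y (Sum.inr 0) (Sum.inr 0) := by
  simp [ymul, Fintype.sum_sum_type, I1.par, (show ((1:ZMod 2)+1) = 0 by decide),
    (show ZMod.val (1 : ZMod 2) = 1 by decide)]

end YmulUnfold

section Graded

variable {A : Type*} [Ring A] [Algebra ℂ A] (𝒜 : ZMod 2 → Submodule ℂ A) [GradedAlgebra 𝒜]

lemma graded_inv_mem {x y : A} (hx : x ∈ 𝒜 0) (h1 : x * y = 1) (h2 : y * x = 1) :
    y ∈ 𝒜 0 := by
  classical
  have hdec : y = (DirectSum.decompose 𝒜 y 0 : A) + (DirectSum.decompose 𝒜 y 1 : A) := by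
    conv_lhs => rw [← DirectSum.sum_support_decompose 𝒜 y]
    rw [Finset.sum_subset (Finset.subset_univ ((DirectSum.decompose 𝒜 y).support))
      (by intro i _ hi
          rw [DFinsupp.notMem_support_iff] at hi
          rw [hi, ZeroMemClass.coe_zero])]
    rw [show (Finset.univ : Finset (ZMod 2)) = {0, 1} by decide]
    rw [Finset.sum_insert (by decide), Finset.sum_singleton]
  set y0 : A := (DirectSum.decompose 𝒜 y 0 : A)
  set y1 : A := (DirectSum.decompose 𝒜 y 1 : A)
  have hy0 : y0 ∈ 𝒜 0 := SetLike.coe_mem _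
  have hy1 : y1 ∈ 𝒜 1 := SetLike.coe_mem _
  have key : y1 * x = 0 := by
    have h1' : y0 * x + y1 * x = 1 := by
      rw [← add_mul, ← hdec, h2]
    have h0 : (y0 * x) ∈ 𝒜 0 := by
      simpa using SetLike.mul_mem_graded hy0 hx
    have hone : (y1 * x) ∈ 𝒜 1 := by
      simpa using SetLike.mul_mem_graded hy1 hx
    have e0 : ((DirectSum.decompose 𝒜 (y0*x)) 1 : A) = 0 :=
      DirectSum.decompose_of_mem_ne 𝒜 h0 (by decide)
    have e1 : ((DirectSum.decompose 𝒜 (y1*x)) 1 : A) = y1 * x :=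
      DirectSum.decompose_of_mem_same 𝒜 hone
    have eo : ((DirectSum.decompose 𝒜 (1:A)) 1 : A) = 0 :=
      DirectSum.decompose_of_mem_ne 𝒜 (SetLike.one_mem_graded 𝒜)
        (show (0 : ZMod 2) ≠ 1 by decide)
    have := congrArg (fun z => ((DirectSum.decompose 𝒜 z) 1 : A)) h1'
    simp only [DirectSum.decompose_add, DirectSum.add_apply, Submodule.coe_add] at this
    rw [e0, e1, eo, zero_add] at this
    exact this
  have hy1z : y1 = 0 := by
    have := congrArg (fun z => z * y) key
    simpa [mul_assoc, h1] using this
  rw [hdec, hy1z, add_zero]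
  exact hy0

lemma coeff_mul_mem {p q : ZMod 2} {f g : PowerSeries A}
    (hf : ∀ r, coeff r f ∈ 𝒜 p) (hg : ∀ r, coeff r g ∈ 𝒜 q) (r : ℕ) :
    coeff r (f * g) ∈ 𝒜 (p + q) := by
  rw [coeff_mul]
  exact Submodule.sum_mem _ fun ij _ => SetLike.mul_mem_graded (hf _) (hg _)

lemma psUnitInv (f : PowerSeries A) (hu : IsUnit (constantCoeff f))
    (hf : ∀ r, coeff r f ∈ 𝒜 0) :
    ∃ g, f * g = 1 ∧ g * f = 1 ∧ ∀ r : ℕ, coeff r g ∈ 𝒜 0 := by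
  obtain ⟨u, hu⟩ := hu
  refine ⟨f.invOfUnit u, mul_invOfUnit f u hu.symm, invOfUnit_mul f u hu.symm, ?_⟩
  have hc0 : (u : A) ∈ 𝒜 0 := by
    rw [hu, ← coeff_zero_eq_constantCoeff_apply]; exact hf 0
  have hv : (↑u⁻¹ : A) ∈ 𝒜 0 := graded_inv_mem 𝒜 hc0 u.mul_inv u.inv_mul
  intro r
  induction r using Nat.strong_induction_on with
  | _ n ih =>
    rw [coeff_invOfUnit]
    split
    · exact hv
    · rw [neg_mul]
      apply Submodule.neg_mem
      have h00 : ((0 : ZMod 2) + 0) = 0 := by decide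
      rw [← h00]
      apply SetLike.mul_mem_graded hv
      apply Submodule.sum_mem
      rintro ⟨i, j⟩ hij
      rw [Finset.HasAntidiagonal.mem_antidiagonal] at hij
      dsimp only
      split
      · next hj =>
        rw [← h00]
        exact SetLike.mul_mem_graded (hf i) (ih j hj)
      · exact Submodule.zero_mem _

end Graded

/-- If `X(u)` is of YQ form, `x_{11}(u)` is invertible and `x_{-1,1}(u) ∈ u⁻¹A[[u⁻¹]]`
(i.e. has vanishing constant term), then `X(u)` is an invertible `2×2` matrix and its
inverse is again of YQ form. -/
theorem stmt7 {A : Type*} [Ring A] [Algebra ℂ A] (𝒜 : ZMod 2 → Submodule ℂ A)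
    [GradedAlgebra 𝒜] (X : I1 → I1 → PowerSeries A) (hX : IsYQ 𝒜 X)
    (hinv : IsUnit (X (Sum.inl 0) (Sum.inl 0)))
    (hlow : PowerSeries.constantCoeff (X (Sum.inr 0) (Sum.inl 0)) = 0) :
    ∃ Y : I1 → I1 → PowerSeries A, IsYQ 𝒜 Y ∧
      (∀ i j, ymul X Y i j = if i = j then 1 else 0) ∧
      (∀ i j, ymul Y X i j = if i = j then 1 else 0) := by
  obtain ⟨hsym, hpar⟩ := hX
  have hd : X (Sum.inr 0) (Sum.inr 0) = negSub (X (Sum.inl 0) (Sum.inl 0)) :=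
    hsym (Sum.inl 0) (Sum.inl 0)
  have hb : X (Sum.inl 0) (Sum.inr 0) = negSub (X (Sum.inr 0) (Sum.inl 0)) :=
    hsym (Sum.inr 0) (Sum.inl 0)
  set a := X (Sum.inl 0) (Sum.inl 0) with ha_def
  set b := X (Sum.inl 0) (Sum.inr 0) with hb_def
  set c := X (Sum.inr 0) (Sum.inl 0) with hc_def
  set d := X (Sum.inr 0) (Sum.inr 0) with hd_def
  -- parities of the entries of X
  have hpa : ∀ r, coeff r a ∈ 𝒜 0 := by
    intro r; simpa [I1.par] using hpar (Sum.inl 0) (Sum.inl 0) r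
  have hpb : ∀ r, coeff r b ∈ 𝒜 1 := by
    intro r; simpa [I1.par] using hpar (Sum.inl 0) (Sum.inr 0) r
  have hpc : ∀ r, coeff r c ∈ 𝒜 1 := by
    intro r; simpa [I1.par] using hpar (Sum.inr 0) (Sum.inl 0) r
  have hpd : ∀ r, coeff r d ∈ 𝒜 0 := by
    intro r
    simpa [I1.par, (show ((1:ZMod 2)+1) = 0 by decide)] using hpar (Sum.inr 0) (Sum.inr 0) r
  -- the inverse g of a
  have hua : IsUnit (constantCoeff a) := hinv.map (constantCoeff)
  obtain ⟨g, hg1, hg2, hpg⟩ := psUnitInv 𝒜 a hua hpa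
  -- the Schur complement s and its inverse t
  set s := d + c * (g * b) with hs_def
  have hcs : constantCoeff s = constantCoeff a := by
    rw [hs_def, map_add, map_mul, hlow, zero_mul, add_zero, hd, negSub_constantCoeff]
  have hps : ∀ r, coeff r s ∈ 𝒜 0 := by
    intro r
    rw [hs_def, map_add]
    refine Submodule.add_mem _ (hpd r) ?_
    have hgb : ∀ r, coeff r (g * b) ∈ 𝒜 1 := by
      intro r; simpa using coeff_mul_mem 𝒜 hpg hpb r
    simpa [(show ((1:ZMod 2)+1) = 0 by decide)] using coeff_mul_mem 𝒜 hpc hgb r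
  have hus : IsUnit (constantCoeff s) := hcs ▸ hua
  obtain ⟨t, ht1, ht2, hpt⟩ := psUnitInv 𝒜 s hus hps
  have hds : d = s - c * (g * b) := eq_sub_of_add_eq hs_def.symm
  -- cancellation helpers
  have hag : ∀ z, a * (g * z) = z := fun z => by rw [← mul_assoc, hg1, one_mul]
  have hga : ∀ z, g * (a * z) = z := fun z => by rw [← mul_assoc, hg2, one_mul]
  have hst : ∀ z, s * (t * z) = z := fun z => by rw [← mul_assoc, ht1, one_mul]
  have hts : ∀ z, t * (s * z) = z := fun z => by rw [← mul_assoc, ht2, one_mul]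
  -- the four entries of the inverse
  set y11 : PowerSeries A := g - g * (b * (t * (c * g))) with hy11_def
  set y12 : PowerSeries A := -(g * (b * t)) with hy12_def
  set y21 : PowerSeries A := -(t * (c * g)) with hy21_def
  set y22 : PowerSeries A := t with hy22_def
  -- the eight relations
  have E11 : a * y11 - b * y21 = 1 := by
    rw [hy11_def, hy21_def, mul_sub, mul_neg, sub_neg_eq_add, hg1, hag]
    abel
  have E12 : a * y12 + b * y22 = 0 := by
    rw [hy12_def, hy22_def, mul_neg, hag]
    abel
  have E21 : c * y11 + d * y21 = 0 := by
    rw [hy11_def, hy21_def, hds]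
    simp only [mul_sub, sub_mul, mul_neg, neg_mul, mul_assoc, hst]
    abel
  have E22 : -(c * y12) + d * y22 = 1 := by
    rw [hy12_def, hy22_def, hds]
    simp only [mul_neg, neg_neg, sub_mul, mul_assoc, ht1]
    abel
    exact ht1
  have F11 : y11 * a - y12 * c = 1 := by
    rw [hy11_def, hy12_def]
    simp only [sub_mul, neg_mul, mul_assoc, hg2, mul_one, one_mul, sub_neg_eq_add]
    abel
  have F12 : y11 * b + y12 * d = 0 := by
    rw [hy11_def, hy12_def, hds]
    simp only [sub_mul, neg_mul, mul_sub, mul_assoc, hg2, ht2, mul_one, one_mul]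
    abel
  have F21 : y21 * a + y22 * c = 0 := by
    rw [hy21_def, hy22_def]
    simp only [neg_mul, mul_assoc, hg2, mul_one]
    abel
  have F22 : -(y21 * b) + y22 * d = 1 := by
    rw [hy21_def, hy22_def, hds]
    simp only [neg_mul, neg_neg, mul_sub, mul_assoc, hg2, ht2, mul_one]
    abel
    exact ht2
  -- uniqueness of a right inverse
  have uniq : ∀ w11 w12 w21 w22 : PowerSeries A,
      a * w11 - b * w21 = 1 → a * w12 + b * w22 = 0 →
      c * w11 + d * w21 = 0 → -(c * w12) + d * w22 = 1 →
      w11 = y11 ∧ w12 = y12 ∧ w21 = y21 ∧ w22 = y22 := by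
    intro w11 w12 w21 w22 e1 e2 e3 e4
    have h11 : w11 = g * (1 + b * w21) := by
      have h := sub_eq_iff_eq_add.mp e1
      calc w11 = g * (a * w11) := (hga w11).symm
        _ = g * (1 + b * w21) := by rw [h]
    have h21 : w21 = y21 := by
      have e3' : c * (g * (1 + b * w21)) + d * w21 = 0 := by rw [← h11]; exact e3
      rw [hds] at e3'
      simp only [mul_add, mul_one, sub_mul, mul_assoc] at e3'
      have hkey : c * g + s * w21 = 0 := by
        rw [show c * g + s * w21
            = c * g + c * (g * (b * w21)) + (s * w21 - c * (g * (b * w21))) from by abel]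
        exact e3'
      have hsw : s * w21 = -(c * g) := by
        have := neg_eq_of_add_eq_zero_right hkey
        rw [← this]
      calc w21 = t * (s * w21) := (hts w21).symm
        _ = t * -(c * g) := by rw [hsw]
        _ = y21 := by rw [hy21_def, mul_neg]
    have h12 : w12 = -(g * (b * w22)) := by
      have e2' : a * w12 = -(b * w22) := eq_neg_of_add_eq_zero_left e2
      calc w12 = g * (a * w12) := (hga w12).symm
        _ = g * -(b * w22) := by rw [e2']
        _ = -(g * (b * w22)) := by rw [mul_neg]
    have h22 : w22 = y22 := by
      have e4' : -(c * -(g * (b * w22))) + d * w22 = 1 := by rw [← h12]; exact e4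
      rw [hds] at e4'
      simp only [mul_neg, neg_neg, sub_mul, mul_assoc] at e4'
      have hsw : s * w22 = 1 := by
        rw [show s * w22
            = c * (g * (b * w22)) + (s * w22 - c * (g * (b * w22))) from by abel]
        exact e4'
      calc w22 = t * (s * w22) := (hts w22).symm
        _ = t := by rw [hsw, mul_one]
      
    have h11' : w11 = y11 := by
      rw [h11, h21, hy21_def, hy11_def]
      rw [mul_add, mul_one, mul_neg, mul_neg, ← sub_eq_add_neg]
    refine ⟨h11', ?_, h21, h22⟩
    rw [h12, h22, hy12_def, hy22_def]
  -- the negSub-transformed family is also a right inverse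
  have hna : negSub d = a := by rw [hd, negSub_negSub]
  have hnb : negSub b = c := by rw [hb, negSub_negSub]
  have hnc : negSub c = b := hb.symm
  have hnd : negSub a = d := hd.symm
  have G11 : a * negSub y22 - b * negSub y12 = 1 := by
    have h := congrArg negSub E22
    rw [negSub_add, negSub_neg, negSub_mul, negSub_mul, negSub_one, hnc, hna] at h
    rw [sub_eq_neg_add]
    exact h
  have G12 : a * negSub y21 + b * negSub y11 = 0 := by
    have h := congrArg negSub E21
    rw [negSub_add, negSub_mul, negSub_mul, hnc, hna, negSub_zero] at h
    rw [add_comm]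
    exact h
  have G21 : c * negSub y22 + d * negSub y12 = 0 := by
    have h := congrArg negSub E12
    rw [negSub_add, negSub_mul, negSub_mul, hnb, hnd, negSub_zero] at h
    rw [add_comm]
    exact h
  have G22 : -(c * negSub y21) + d * negSub y11 = 1 := by
    have h := congrArg negSub E11
    rw [negSub_sub, negSub_mul, negSub_mul, negSub_one, hnb, hnd] at h
    rw [← sub_eq_neg_add]
    exact h
  obtain ⟨q11, q12, q21, q22⟩ := uniq _ _ _ _ G11 G12 G21 G22
  -- assemble
  refine ⟨fun i j => match i, j with
    | Sum.inl _, Sum.inl _ => y11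
    | Sum.inl _, Sum.inr _ => y12
    | Sum.inr _, Sum.inl _ => y21
    | Sum.inr _, Sum.inr _ => y22, ⟨?_, ?_⟩, ?_, ?_⟩
  · -- symmetry
    rintro (i | i) (j | j)
    · exact q22.symm
    · exact q21.symm
    · exact q12.symm
    · exact q11.symm
  · -- parity
    have hcg : ∀ r, coeff r (c * g) ∈ 𝒜 1 := by
      intro r; simpa using coeff_mul_mem 𝒜 hpc hpg r
    have htcg : ∀ r, coeff r (t * (c * g)) ∈ 𝒜 1 := by
      intro r; simpa using coeff_mul_mem 𝒜 hpt hcg r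
    have hbt : ∀ r, coeff r (b * t) ∈ 𝒜 1 := by
      intro r; simpa using coeff_mul_mem 𝒜 hpb hpt r
    have hbtcg : ∀ r, coeff r (b * (t * (c * g))) ∈ 𝒜 0 := by
      intro r
      simpa [(show ((1:ZMod 2)+1) = 0 by decide)] using coeff_mul_mem 𝒜 hpb htcg r
    have hp11 : ∀ r, coeff r y11 ∈ 𝒜 0 := by
      intro r
      rw [hy11_def, map_sub]
      refine Submodule.sub_mem _ (hpg r) ?_
      simpa using coeff_mul_mem 𝒜 hpg hbtcg r
    have hp12 : ∀ r, coeff r y12 ∈ 𝒜 1 := by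
      intro r
      rw [hy12_def, map_neg]
      refine Submodule.neg_mem _ ?_
      simpa using coeff_mul_mem 𝒜 hpg hbt r
    have hp21 : ∀ r, coeff r y21 ∈ 𝒜 1 := by
      intro r
      rw [hy21_def, map_neg]
      exact Submodule.neg_mem _ (htcg r)
    rintro (i | i) (j | j) r
    · simpa [I1.par] using hp11 r
    · simpa [I1.par] using hp12 r
    · simpa [I1.par] using hp21 r
    · simpa [I1.par, (show ((1:ZMod 2)+1) = 0 by decide)] using hpt r
  · -- X * Y = 1
    have hFin : ∀ x : Fin 1, x = 0 := fun x => Subsingleton.elim _ _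
    rintro (i | i) (j | j) <;> rw [hFin i, hFin j]
    · rw [if_pos rfl, ymul_ll]; exact E11
    · rw [if_neg (by simp), ymul_lr]; exact E12
    · rw [if_neg (by simp), ymul_rl]; exact E21
    · rw [if_pos rfl, ymul_rr]; exact E22
  · -- Y * X = 1
    have hFin : ∀ x : Fin 1, x = 0 := fun x => Subsingleton.elim _ _
    rintro (i | i) (j | j) <;> rw [hFin i, hFin j]
    · rw [if_pos rfl, ymul_ll]; exact F11
    · rw [if_neg (by simp), ymul_lr]; exact F12
    · rw [if_neg (by simp), ymul_rl]; exact F21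
    · rw [if_pos rfl, ymul_rr]; exact F22
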